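/- Suppose u and v are infinite words over a 4-letter alphabet A, each containing no squares in any arithmetic progression of odd difference. Define the 2-dimensional word w over A × A by w_{m,n} = (u_m, v_n). Then every line of w is squarefree: for all i_1, i_2 ≥ 0 and integers j_1, j_2 with gcd(j_1, j_2) = 1, the infinite word x_t = w_{i_1 + j_1 t, i_2 + j_2 t} (t ≥ 0) contains no nonempty square subword. -/

import Mathlib

def IsSubword {α : Type*} (f : ℕ → α) (x : List α) : Prop :=
  ∃ i, x = (List.range x.length).map fun m => f (i + m)

private lemma aux_line {A : Type*} (c : ℕ → A)
    (hc : ∀ i j t, Odd j → 1 ≤ t → ∃ s < t, c (i + s * j) ≠ c (i + (s + t) * j))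
    (i₀ : ℕ) (j : ℤ) (hj : Odd j)
    (hpos : ∀ t : ℕ, 0 ≤ (i₀ : ℤ) + j * t)
    (i L : ℕ) (hL : 1 ≤ L)
    (heq : ∀ m, m < L →
      c ((i₀ : ℤ) + j * ((i + m : ℕ) : ℤ)).toNat
        = c ((i₀ : ℤ) + j * ((i + (L + m) : ℕ) : ℤ)).toNat) :
    False := by
  rcases le_or_gt 0 j with hj0 | hj0
  · set k := j.toNat with hk
    have hjk : (k : ℤ) = j := Int.toNat_of_nonneg hj0
    have hkodd : Odd k := by
      rcases hj with ⟨m, hm⟩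
      exact ⟨m.toNat, by omega⟩
    obtain ⟨s, hs, hne⟩ := hc (i₀ + i * k) k L hkodd hL
    apply hne
    have h1 : (i₀ : ℤ) + j * ((i + s : ℕ) : ℤ) = ((i₀ + i * k + s * k : ℕ) : ℤ) := by
      rw [← hjk]; push_cast; ring
    have h2 : (i₀ : ℤ) + j * ((i + (L + s) : ℕ) : ℤ)
        = ((i₀ + i * k + (s + L) * k : ℕ) : ℤ) := by
      rw [← hjk]; push_cast; ring
    have := heq s hs
    rw [h1, h2, Int.toNat_natCast, Int.toNat_natCast] at this
    exact this
  · set k := (-j).toNat with hk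
    have hjk : (k : ℤ) = -j := Int.toNat_of_nonneg (by omega)
    have hkodd : Odd k := by
      rcases hj with ⟨m, hm⟩
      exact ⟨(-m - 1).toNat, by omega⟩
    set N := i + 2 * L - 1 with hNdef
    have hN : (N : ℤ) = (i : ℤ) + 2 * L - 1 := by
      have : (N : ℤ) = ((i + 2 * L - 1 : ℕ) : ℤ) := rfl
      omega
    set a := ((i₀ : ℤ) + j * N).toNat with ha'
    have ha : (a : ℤ) = (i₀ : ℤ) + j * N := Int.toNat_of_nonneg (hpos N)
    obtain ⟨s, hs, hne⟩ := hc a k L hkodd hL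
    apply hne
    set m := L - 1 - s with hmdef
    have hm : m < L := by omega
    have hmz : (m : ℤ) = (L : ℤ) - 1 - s := by omega
    have h1 : (i₀ : ℤ) + j * ((i + m : ℕ) : ℤ) = ((a + (s + L) * k : ℕ) : ℤ) := by
      push_cast
      rw [hmz, ha, hN, hjk]; ring
    have h2 : (i₀ : ℤ) + j * ((i + (L + m) : ℕ) : ℤ) = ((a + s * k : ℕ) : ℤ) := by
      push_cast
      rw [hmz, ha, hN, hjk]; ring
    have := heq m hm
    rw [h1, h2, Int.toNat_natCast, Int.toNat_natCast] at this
    exact this.symm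

/-- If `u` and `v` over a 4-letter alphabet avoid squares in arithmetic
progressions of odd difference, then every line of the 2-dimensional word
`w_{m,n} = (u_m, v_n)` is squarefree. -/
theorem product_word_lines_squarefree
    (A : Type*) [Fintype A] (hA : Fintype.card A = 4)
    (u v : ℕ → A)
    (hu : ∀ i j t, Odd j → 1 ≤ t → ∃ s < t, u (i + s * j) ≠ u (i + (s + t) * j))
    (hv : ∀ i j t, Odd j → 1 ≤ t → ∃ s < t, v (i + s * j) ≠ v (i + (s + t) * j))
    (w : ℕ → ℕ → A × A) (hw : ∀ m n, w m n = (u m, v n))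
    (i₁ i₂ : ℕ) (j₁ j₂ : ℤ) (hgcd : Int.gcd j₁ j₂ = 1)
    (h₁ : ∀ t : ℕ, 0 ≤ (i₁ : ℤ) + j₁ * t) (h₂ : ∀ t : ℕ, 0 ≤ (i₂ : ℤ) + j₂ * t) :
    ∀ x : List (A × A), x ≠ [] →
      ¬ IsSubword
        (fun t : ℕ => w ((i₁ : ℤ) + j₁ * t).toNat ((i₂ : ℤ) + j₂ * t).toNat)
        (x ++ x) := by
  intro x hx hsub
  obtain ⟨i, hi⟩ := hsub
  set f : ℕ → A × A :=
    fun t : ℕ => w ((i₁ : ℤ) + j₁ * t).toNat ((i₂ : ℤ) + j₂ * t).toNat with hf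
  set L := x.length with hLdef
  have hL : 1 ≤ L := List.length_pos_iff.mpr hx
  have hlen : (x ++ x).length = 2 * L := by simp [List.length_append]; omega
  have hget : ∀ m (h : m < (x ++ x).length), (x ++ x)[m] = f (i + m) := by
    intro m h
    rw [List.getElem_of_eq hi h, List.getElem_map, List.getElem_range]
  have key : ∀ m, m < L → f (i + m) = f (i + (L + m)) := by
    intro m hm
    have h1 := hget m (by omega)
    have h2 := hget (L + m) (by omega)
    rw [← h1, ← h2, List.getElem_append_left (by omega),
      List.getElem_append_right (by omega)]
    congr 1
    omega
  have hodd : Odd j₁ ∨ Odd j₂ := by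
    by_contra h
    push_neg at h
    rw [Int.not_odd_iff_even, Int.not_odd_iff_even] at h
    have h2 : (2 : ℤ) ∣ (Int.gcd j₁ j₂ : ℤ) :=
      Int.dvd_coe_gcd h.1.two_dvd h.2.two_dvd
    rw [hgcd] at h2
    norm_num at h2
  rcases hodd with hodd | hodd
  · refine aux_line u hu i₁ j₁ hodd h₁ i L hL ?_
    intro m hm
    have := key m hm
    simp only [hf, hw, Prod.mk.injEq] at this
    exact this.1
  · refine aux_line v hv i₂ j₂ hodd h₂ i L hL ?_
    intro m hm
    have := key m hm
    simp only [hf, hw, Prod.mk.injEq] at this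
    exact this.2
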